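/- The shape regularity of the Kuhn simplex T̂ ⊂ ℝ^n equals γ(T̂) = √n · (1 + (n−1)/√2), where γ(S) = R(S)/r(S). -/

import Mathlib

open Metric Set

/-- Diameter of the largest closed ball inscribed in `S`. -/
noncomputable def inDiam {n : ℕ} (S : Set (EuclideanSpace ℝ (Fin n))) : ℝ :=
  2 * sSup {r : ℝ | 0 ≤ r ∧ ∃ c, Metric.closedBall c r ⊆ S}

/-- Diameter of the smallest closed ball containing `S`. -/
noncomputable def circumDiam {n : ℕ} (S : Set (EuclideanSpace ℝ (Fin n))) : ℝ :=
  2 * sInf {r : ℝ | 0 ≤ r ∧ ∃ c, S ⊆ Metric.closedBall c r}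

/-- Shape regularity `γ(S) = R(S)/r(S)`. -/
noncomputable def shapeReg {n : ℕ} (S : Set (EuclideanSpace ℝ (Fin n))) : ℝ :=
  circumDiam S / inDiam S

/-- Height of the simplex with vertices `v` over the hyperface opposite vertex `i`. -/
noncomputable def simplexHeight {n : ℕ} (v : Fin (n + 1) → EuclideanSpace ℝ (Fin n))
    (i : Fin (n + 1)) : ℝ :=
  sSup ((fun x => Metric.infDist x (convexHull ℝ (v '' {i}ᶜ))) ''
    convexHull ℝ (Set.range v))

/-- Minimal height of the simplex with vertices `v`. -/
noncomputable def minHeight {n : ℕ} (v : Fin (n + 1) → EuclideanSpace ℝ (Fin n)) : ℝ :=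
  ⨅ i, simplexHeight v i

/-- The `k`-th vertex of the Kuhn simplex, `v_k = e_1 + ⋯ + e_k`. -/
noncomputable def kuhnVertex (n : ℕ) (k : Fin (n + 1)) : EuclideanSpace ℝ (Fin n) :=
  (WithLp.equiv 2 (Fin n → ℝ)).symm fun i => if (i : ℕ) < (k : ℕ) then 1 else 0

/-- The Kuhn simplex `conv{0, e₁, e₁+e₂, …, e₁+⋯+e_n} ⊂ ℝⁿ`. -/
noncomputable def kuhnSimplex (n : ℕ) : Set (EuclideanSpace ℝ (Fin n)) :=
  convexHull ℝ (Set.range (kuhnVertex n))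

def KP (n : ℕ) : Set (EuclideanSpace ℝ (Fin n)) :=
  {x | (∀ i : Fin n, 0 ≤ x i) ∧ (∀ i : Fin n, x i ≤ 1) ∧ ∀ i j : Fin n, i ≤ j → x j ≤ x i}

lemma kuhnVertex_apply (n : ℕ) (k : Fin (n+1)) (i : Fin n) :
    kuhnVertex n k i = if (i : ℕ) < (k : ℕ) then 1 else 0 := rfl

lemma convex_KP (n : ℕ) : Convex ℝ (KP n) := by
  intro x hx y hy a b ha hb hab
  have hxy : ∀ i : Fin n, (a • x + b • y) i = a * x i + b * y i := fun i => rfl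
  refine ⟨fun i => ?_, fun i => ?_, fun i j hij => ?_⟩
  · rw [hxy]; have := hx.1 i; have := hy.1 i; positivity
  · rw [hxy]
    calc a * x i + b * y i ≤ a * 1 + b * 1 := by
          gcongr; exacts [hx.2.1 i, hy.2.1 i]
      _ = 1 := by linarith
  · rw [hxy, hxy]
    have h1 := hx.2.2 i j hij
    have h2 := hy.2.2 i j hij
    nlinarith

lemma kuhn_subset_KP (n : ℕ) : kuhnSimplex n ⊆ KP n := by
  apply convexHull_min _ (convex_KP n)
  rintro _ ⟨k, rfl⟩
  refine ⟨fun i => ?_, fun i => ?_, fun i j hij => ?_⟩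
  · rw [kuhnVertex_apply]; split <;> norm_num
  · rw [kuhnVertex_apply]; split <;> norm_num
  · rw [kuhnVertex_apply, kuhnVertex_apply]
    by_cases h : (j : ℕ) < (k : ℕ)
    · have : (i : ℕ) < (k : ℕ) := lt_of_le_of_lt hij h
      simp [h, this]
    · simp only [h, if_false]; split <;> norm_num

lemma sum_apply' {n : ℕ} (w : Fin (n+1) → ℝ) (v : Fin (n+1) → EuclideanSpace ℝ (Fin n)) (i : Fin n) :
    (∑ k, w k • v k) i = ∑ k, w k * (v k i) := by
  induction (Finset.univ : Finset (Fin (n+1))) using Finset.induction with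
  | empty => rfl
  | insert _ _ h ih => rw [Finset.sum_insert h, Finset.sum_insert h, ← ih]; rfl

lemma KP_subset_kuhn (n : ℕ) : KP n ⊆ kuhnSimplex n := by
  intro x hx
  obtain ⟨h0, h1, hmono⟩ := hx
  set X : ℕ → ℝ := fun j => if h : j < n then x ⟨j, h⟩ else 0 with hX
  set g : ℕ → ℝ := fun j => if j = 0 then 1 else X (j - 1) with hg
  set w : Fin (n+1) → ℝ := fun k => g (k : ℕ) - g ((k : ℕ) + 1) with hw
  have hXn : ∀ j, n ≤ j → X j = 0 := by intro j hj; simp [hX, Nat.not_lt.mpr hj]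
  have hXmono : ∀ j, X (j+1) ≤ X j := by
    intro j
    by_cases hj : j + 1 < n
    · have hj' : j < n := Nat.lt_of_succ_lt hj
      simp only [hX, dif_pos hj, dif_pos hj']
      exact hmono ⟨j, hj'⟩ ⟨j+1, hj⟩ (by simp [Fin.le_def])
    · by_cases hj' : j < n
      · simp only [hX, dif_neg hj, dif_pos hj']; exact h0 _
      · simp [hX, dif_neg hj, dif_neg hj']
  have hXle1 : ∀ j, X j ≤ 1 := by
    intro j
    by_cases hj : j < n
    · simp only [hX, dif_pos hj]; exact h1 _
    · simp [hX, dif_neg hj]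
  have hwnn : ∀ k : Fin (n+1), 0 ≤ w k := by
    intro k
    simp only [hw]
    rcases Nat.eq_zero_or_pos (k : ℕ) with h | h
    · rw [h]
      simp only [hg]
      norm_num
      linarith [hXle1 0]
    · have hk : (k:ℕ) ≠ 0 := Nat.pos_iff_ne_zero.mp h
      have hk1 : (k:ℕ) + 1 ≠ 0 := by omega
      simp only [hg, if_neg hk, if_neg hk1]
      have : (k:ℕ) + 1 - 1 = ((k:ℕ) - 1) + 1 := by omega
      rw [this]
      linarith [hXmono ((k:ℕ) - 1)]
  have hsum : ∑ k, w k = 1 := by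
    rw [hw, Fin.sum_univ_eq_sum_range (fun j => g j - g (j+1)) (n+1),
      Finset.sum_range_sub' g (n+1)]
    simp [hg, hXn n le_rfl]
  have hcoord : ∀ i : Fin n, ∑ k, w k * (kuhnVertex n k i) = x i := by
    intro i
    have hv : ∀ k : Fin (n+1), kuhnVertex n k i = if (i:ℕ) < (k:ℕ) then 1 else 0 := fun _ => rfl
    set f : ℕ → ℝ := fun j => (g j - g (j+1)) * (if (i:ℕ) < j then 1 else 0) with hf
    have step1 : ∑ k, w k * (kuhnVertex n k i) = ∑ j ∈ Finset.range (n+1), f j := by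
      rw [← Fin.sum_univ_eq_sum_range f (n+1)]
      exact Finset.sum_congr rfl fun k _ => by rw [hv, hw, hf]
    set h : ℕ → ℝ := fun j => g (max j ((i:ℕ)+1)) with hh
    have step2 : ∀ j, f j = h j - h (j+1) := by
      intro j
      by_cases hij : (i:ℕ) < j
      · have e1 : max j ((i:ℕ)+1) = j := max_eq_left (by omega)
        have e2 : max (j+1) ((i:ℕ)+1) = j+1 := max_eq_left (by omega)
        simp [hf, hh, hij, e1, e2]
      · have e1 : max j ((i:ℕ)+1) = (i:ℕ)+1 := max_eq_right (by omega)
        have e2 : max (j+1) ((i:ℕ)+1) = (i:ℕ)+1 := max_eq_right (by omega)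
        simp [hf, hh, hij, e1, e2]
    rw [step1, Finset.sum_congr rfl fun j _ => step2 j, Finset.sum_range_sub' h (n+1)]
    have e0 : max 0 ((i:ℕ)+1) = (i:ℕ)+1 := max_eq_right (by omega)
    have e1 : max (n+1) ((i:ℕ)+1) = n+1 := max_eq_left (by omega)
    have hi : (i:ℕ) < n := i.isLt
    simp only [hh, e0, e1, hg]
    rw [if_neg (by omega : (i:ℕ)+1 ≠ 0), if_neg (by omega : n+1 ≠ 0)]
    simp only [Nat.add_sub_cancel]
    rw [hXn n le_rfl, hX]
    simp [dif_pos hi]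
  have hx_eq : x = ∑ k, w k • kuhnVertex n k := by
    ext i
    rw [sum_apply' w (kuhnVertex n) i, hcoord i]
  rw [hx_eq, ← Finset.centerMass_eq_of_sum_1 Finset.univ (kuhnVertex n) hsum]
  exact Finset.centerMass_mem_convexHull Finset.univ (fun k _ => hwnn k)
    (by rw [hsum]; norm_num) (fun k _ => Set.mem_range_self k)

lemma coord_le_dist {n : ℕ} (y c : EuclideanSpace ℝ (Fin n)) (i : Fin n) :
    |y i - c i| ≤ dist y c := by
  rw [EuclideanSpace.dist_eq, ← Real.dist_eq]
  have h1 : dist (y i) (c i) ^ 2 ≤ ∑ j, dist (y j) (c j) ^ 2 :=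
    Finset.single_le_sum (f := fun j => dist (y j) (c j) ^ 2)
      (fun j _ => sq_nonneg _) (Finset.mem_univ i)
  calc dist (y i) (c i) = Real.sqrt (dist (y i) (c i) ^ 2) :=
        (Real.sqrt_sq dist_nonneg).symm
    _ ≤ _ := Real.sqrt_le_sqrt h1

lemma coord_sub_le_dist {n : ℕ} (y c : EuclideanSpace ℝ (Fin n)) {i j : Fin n} (hij : i ≠ j) :
    (y i - c i) - (y j - c j) ≤ Real.sqrt 2 * dist y c := by
  rw [EuclideanSpace.dist_eq]
  set S := ∑ k, dist (y k) (c k) ^ 2 with hS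
  have hSnn : 0 ≤ S := Finset.sum_nonneg fun k _ => sq_nonneg _
  have hpair : dist (y i) (c i) ^ 2 + dist (y j) (c j) ^ 2 ≤ S := by
    rw [hS]
    have := Finset.sum_le_univ_sum_of_nonneg (s := {i, j})
      (f := fun k => dist (y k) (c k) ^ 2) (fun k => sq_nonneg _)
    rwa [Finset.sum_pair hij] at this
  have hsq : ((y i - c i) - (y j - c j)) ^ 2 ≤ 2 * S := by
    have e1 : dist (y i) (c i) ^ 2 = (y i - c i) ^ 2 := by
      rw [Real.dist_eq, sq_abs]
    have e2 : dist (y j) (c j) ^ 2 = (y j - c j) ^ 2 := by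
      rw [Real.dist_eq, sq_abs]
    rw [e1, e2] at hpair
    nlinarith [sq_nonneg ((y i - c i) + (y j - c j))]
  calc (y i - c i) - (y j - c j) ≤ |(y i - c i) - (y j - c j)| := le_abs_self _
    _ = Real.sqrt (((y i - c i) - (y j - c j)) ^ 2) := (Real.sqrt_sq_eq_abs _).symm
    _ ≤ Real.sqrt (2 * S) := Real.sqrt_le_sqrt hsq
    _ = Real.sqrt 2 * Real.sqrt S := Real.sqrt_mul (by norm_num) S

lemma kuhn_circum (n : ℕ) :
    sInf {r : ℝ | 0 ≤ r ∧ ∃ c, kuhnSimplex n ⊆ Metric.closedBall c r} = Real.sqrt n / 2 := by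
  set ctr : EuclideanSpace ℝ (Fin n) := (WithLp.equiv 2 (Fin n → ℝ)).symm fun _ => 1/2 with hctr
  apply IsLeast.csInf_eq
  constructor
  · refine ⟨by positivity, ctr, ?_⟩
    apply convexHull_min _ (convex_closedBall ctr _)
    rintro _ ⟨k, rfl⟩
    rw [mem_closedBall, EuclideanSpace.dist_eq]
    have hterm : ∀ i : Fin n, dist (kuhnVertex n k i) (ctr i) ^ 2 = 1/4 := by
      intro i
      show dist (if (i:ℕ) < (k:ℕ) then (1:ℝ) else 0) (1/2) ^ 2 = 1/4
      split <;> (rw [Real.dist_eq]; norm_num)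
    rw [Finset.sum_congr rfl fun i _ => hterm i, Finset.sum_const, Finset.card_univ,
      Fintype.card_fin]
    rw [nsmul_eq_mul, show (n:ℝ) * (1/4) = n / 4 by ring,
      Real.sqrt_div (by positivity : (0:ℝ) ≤ (n:ℝ)),
      show Real.sqrt 4 = 2 by rw [show (4:ℝ) = 2^2 by norm_num, Real.sqrt_sq (by norm_num)]]
  · rintro r ⟨hr, c, hc⟩
    have h0 : kuhnVertex n 0 ∈ kuhnSimplex n := subset_convexHull ℝ _ (Set.mem_range_self 0)
    have hl : kuhnVertex n (Fin.last n) ∈ kuhnSimplex n :=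
      subset_convexHull ℝ _ (Set.mem_range_self _)
    have hd : dist (kuhnVertex n 0) (kuhnVertex n (Fin.last n)) = Real.sqrt n := by
      rw [EuclideanSpace.dist_eq]
      have hterm : ∀ i : Fin n, dist (kuhnVertex n 0 i) (kuhnVertex n (Fin.last n) i) ^ 2 = 1 := by
        intro i
        show dist (if (i:ℕ) < (0:Fin (n+1)) then (1:ℝ) else 0)
          (if (i:ℕ) < ((Fin.last n):ℕ) then (1:ℝ) else 0) ^ 2 = 1
        rw [if_neg (by simp), if_pos (by simpa [Fin.last] using i.isLt)]
        rw [Real.dist_eq]; norm_num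
      rw [Finset.sum_congr rfl fun i _ => hterm i, Finset.sum_const, Finset.card_univ,
        Fintype.card_fin]
      simp
    have := dist_triangle (kuhnVertex n 0) c (kuhnVertex n (Fin.last n))
    have h1 := hc h0
    have h2 := hc hl
    rw [mem_closedBall] at h1 h2
    rw [dist_comm c _] at this
    rw [hd] at this
    linarith

lemma kuhn_inradius (n : ℕ) (hn : 1 ≤ n) :
    sSup {r : ℝ | 0 ≤ r ∧ ∃ c, Metric.closedBall c r ⊆ kuhnSimplex n}
      = 1 / (2 + ((n:ℝ) - 1) * Real.sqrt 2) := by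
  have hs2 : (0:ℝ) < Real.sqrt 2 := by positivity
  have hn1 : (0:ℝ) ≤ (n:ℝ) - 1 := by
    have : (1:ℝ) ≤ (n:ℝ) := by exact_mod_cast hn
    linarith
  have hden : (0:ℝ) < 2 + ((n:ℝ) - 1) * Real.sqrt 2 := by positivity
  set ρ : ℝ := 1 / (2 + ((n:ℝ) - 1) * Real.sqrt 2) with hρ
  have hρpos : 0 < ρ := by positivity
  have hkey : ((n:ℝ) - 1) * Real.sqrt 2 * ρ = 1 - 2 * ρ := by
    rw [hρ]; field_simp; ring
  apply IsGreatest.csSup_eq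
  constructor
  · -- ρ is attained: explicit incenter
    refine ⟨le_of_lt hρpos, (WithLp.equiv 2 (Fin n → ℝ)).symm
      (fun i => 1 - ρ - (i:ℝ) * (Real.sqrt 2 * ρ)), ?_⟩
    set c : EuclideanSpace ℝ (Fin n) := (WithLp.equiv 2 (Fin n → ℝ)).symm
      (fun i => 1 - ρ - (i:ℝ) * (Real.sqrt 2 * ρ)) with hc
    intro y hy
    rw [mem_closedBall] at hy
    apply KP_subset_kuhn
    have hcapp : ∀ i : Fin n, c i = 1 - ρ - (i:ℝ) * (Real.sqrt 2 * ρ) := fun _ => rfl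
    have hib : ∀ i : Fin n, (i:ℝ) ≤ (n:ℝ) - 1 := by
      intro i
      have : (i:ℕ) < n := i.isLt
      have : ((i:ℕ):ℝ) ≤ (n:ℝ) - 1 := by
        have : (i:ℕ) + 1 ≤ n := this
        have := (Nat.cast_le (α := ℝ)).mpr this
        push_cast at this
        linarith
      exact this
    refine ⟨fun i => ?_, fun i => ?_, fun i j hij => ?_⟩
    · have h1 := coord_le_dist y c i
      have h2 : c i ≥ ρ := by
        rw [hcapp]
        have : (i:ℝ) * (Real.sqrt 2 * ρ) ≤ ((n:ℝ) - 1) * (Real.sqrt 2 * ρ) := by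
          apply mul_le_mul_of_nonneg_right (hib i); positivity
        nlinarith
      have := abs_le.mp (h1.trans hy)
      linarith [this.1]
    · have h1 := coord_le_dist y c i
      have h2 : c i ≤ 1 - ρ := by
        rw [hcapp]
        have : 0 ≤ (i:ℝ) * (Real.sqrt 2 * ρ) := by positivity
        linarith
      have := abs_le.mp (h1.trans hy)
      linarith [this.2]
    · rcases eq_or_lt_of_le hij with rfl | hlt
      · exact le_rfl
      · have hne : j ≠ i := hlt.ne'
        have h1 := coord_sub_le_dist y c (i := j) (j := i) hne
        have hdist : Real.sqrt 2 * dist y c ≤ Real.sqrt 2 * ρ := by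
          apply mul_le_mul_of_nonneg_left hy (le_of_lt hs2)
        have hgap : c i - c j = ((j:ℝ) - (i:ℝ)) * (Real.sqrt 2 * ρ) := by
          rw [hcapp, hcapp]; ring
        have hji : (1:ℝ) ≤ (j:ℝ) - (i:ℝ) := by
          have : (i:ℕ) < (j:ℕ) := hlt
          have : (i:ℕ) + 1 ≤ (j:ℕ) := this
          have := (Nat.cast_le (α := ℝ)).mpr this
          push_cast at this
          linarith
        have : c i - c j ≥ Real.sqrt 2 * ρ := by
          rw [hgap]
          have := mul_le_mul_of_nonneg_right hji (by positivity : (0:ℝ) ≤ Real.sqrt 2 * ρ)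
          linarith
        linarith [h1.trans hdist]
  · -- upper bound
    rintro s ⟨hs, c', hc'⟩
    have hsub : Metric.closedBall c' s ⊆ KP n := hc'.trans (kuhn_subset_KP n)
    have h0n : 0 < n := hn
    have hmem : ∀ v : EuclideanSpace ℝ (Fin n), ‖v‖ ≤ s → c' + v ∈ KP n := by
      intro v hv
      apply hsub
      rw [mem_closedBall, dist_eq_norm]
      simpa using hv
    -- step 1 : c' 0 + s ≤ 1
    have step1 : c' ⟨0, h0n⟩ + s ≤ 1 := by
      have := hmem (s • EuclideanSpace.single (⟨0, h0n⟩ : Fin n) (1:ℝ)) (by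
        rw [norm_smul, EuclideanSpace.norm_single]
        simp [abs_of_nonneg hs])
      have happ : (c' + s • EuclideanSpace.single (⟨0, h0n⟩ : Fin n) (1:ℝ)) ⟨0, h0n⟩
          = c' ⟨0, h0n⟩ + s := by
        show c' ⟨0, h0n⟩ + s * (EuclideanSpace.single (⟨0, h0n⟩ : Fin n) (1:ℝ)) ⟨0, h0n⟩ = _
        rw [EuclideanSpace.single_apply, if_pos rfl]; ring
      have := this.2.1 ⟨0, h0n⟩
      rwa [happ] at this
    -- step 2 : s ≤ c' (n-1)
    have hlast : n - 1 < n := by omega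
    have step2 : s ≤ c' ⟨n - 1, hlast⟩ := by
      have := hmem ((-s) • EuclideanSpace.single (⟨n-1, hlast⟩ : Fin n) (1:ℝ)) (by
        rw [norm_smul, EuclideanSpace.norm_single]
        simp [abs_of_nonneg hs])
      have happ : (c' + (-s) • EuclideanSpace.single (⟨n-1, hlast⟩ : Fin n) (1:ℝ)) ⟨n-1, hlast⟩
          = c' ⟨n-1, hlast⟩ - s := by
        show c' ⟨n-1, hlast⟩ + (-s) * (EuclideanSpace.single (⟨n-1, hlast⟩ : Fin n) (1:ℝ)) ⟨n-1, hlast⟩ = _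
        rw [EuclideanSpace.single_apply, if_pos rfl]; ring
      have := this.1 ⟨n-1, hlast⟩
      rw [happ] at this
      linarith
    -- step 3: consecutive gaps
    have step3 : ∀ a : ℕ, ∀ ha : a + 1 < n,
        Real.sqrt 2 * s ≤ c' ⟨a, Nat.lt_of_succ_lt ha⟩ - c' ⟨a+1, ha⟩ := by
      intro a ha
      have ha' : a < n := Nat.lt_of_succ_lt ha
      set u : EuclideanSpace ℝ (Fin n) :=
        EuclideanSpace.single (⟨a+1, ha⟩ : Fin n) (1:ℝ) - EuclideanSpace.single (⟨a, ha'⟩ : Fin n) (1:ℝ) with hu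
      have hne : (⟨a+1, ha⟩ : Fin n) ≠ ⟨a, ha'⟩ := by
        simp [Fin.ext_iff]
      have hnu : ‖u‖ = Real.sqrt 2 := by
        rw [hu, EuclideanSpace.norm_eq]
        congr 1
        have hterm : ∀ k : Fin n,
            ‖(EuclideanSpace.single (⟨a+1, ha⟩ : Fin n) (1:ℝ) - EuclideanSpace.single (⟨a, ha'⟩ : Fin n) (1:ℝ)) k‖^2
            = (if k = ⟨a+1, ha⟩ then 1 else 0) + (if k = ⟨a, ha'⟩ then 1 else 0) := by
          intro k
          have : (EuclideanSpace.single (⟨a+1, ha⟩ : Fin n) (1:ℝ) - EuclideanSpace.single (⟨a, ha'⟩ : Fin n) (1:ℝ)) k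
              = (if k = ⟨a+1, ha⟩ then 1 else 0) - (if k = ⟨a, ha'⟩ then 1 else 0) := by
            show (EuclideanSpace.single (⟨a+1, ha⟩ : Fin n) (1:ℝ)) k - (EuclideanSpace.single (⟨a, ha'⟩ : Fin n) (1:ℝ)) k = _
            rw [EuclideanSpace.single_apply, EuclideanSpace.single_apply]
          rw [this]
          by_cases h1 : k = ⟨a+1, ha⟩
          · subst h1; simp [hne]
          · simp only [if_neg h1]
            by_cases h2 : k = ⟨a, ha'⟩ <;> simp [h2]
        rw [Finset.sum_congr rfl fun k _ => hterm k, Finset.sum_add_distrib]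
        rw [Finset.sum_ite_eq' Finset.univ (⟨a+1, ha⟩ : Fin n) (fun _ => (1:ℝ)),
          Finset.sum_ite_eq' Finset.univ (⟨a, ha'⟩ : Fin n) (fun _ => (1:ℝ))]
        norm_num
      have hmem' := hmem ((s / Real.sqrt 2) • u) (by
        rw [norm_smul, hnu, Real.norm_eq_abs, abs_of_nonneg (by positivity)]
        rw [div_mul_cancel₀]
        exact hs2.ne')
      have huapp1 : ((s / Real.sqrt 2) • u) ⟨a, ha'⟩ = -(s / Real.sqrt 2) := by
        show (s / Real.sqrt 2) * (u ⟨a, ha'⟩) = _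
        have : u ⟨a, ha'⟩ = -1 := by
          show (EuclideanSpace.single (⟨a+1, ha⟩ : Fin n) (1:ℝ)) ⟨a, ha'⟩
            - (EuclideanSpace.single (⟨a, ha'⟩ : Fin n) (1:ℝ)) ⟨a, ha'⟩ = -1
          rw [EuclideanSpace.single_apply, EuclideanSpace.single_apply,
            if_neg (by simp [Fin.ext_iff] : ¬(⟨a, ha'⟩ : Fin n) = ⟨a+1, ha⟩), if_pos rfl]
          norm_num
        rw [this]; ring
      have huapp2 : ((s / Real.sqrt 2) • u) ⟨a+1, ha⟩ = s / Real.sqrt 2 := by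
        show (s / Real.sqrt 2) * (u ⟨a+1, ha⟩) = _
        have : u ⟨a+1, ha⟩ = 1 := by
          show (EuclideanSpace.single (⟨a+1, ha⟩ : Fin n) (1:ℝ)) ⟨a+1, ha⟩
            - (EuclideanSpace.single (⟨a, ha'⟩ : Fin n) (1:ℝ)) ⟨a+1, ha⟩ = 1
          rw [EuclideanSpace.single_apply, EuclideanSpace.single_apply, if_pos rfl, if_neg hne]
          norm_num
        rw [this]; ring
      have hmono := hmem'.2.2 ⟨a, ha'⟩ ⟨a+1, ha⟩ (by simp [Fin.le_def])
      have e1 : (c' + (s / Real.sqrt 2) • u) ⟨a, ha'⟩ = c' ⟨a, ha'⟩ - s / Real.sqrt 2 := by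
        show c' ⟨a, ha'⟩ + ((s / Real.sqrt 2) • u) ⟨a, ha'⟩ = _
        rw [huapp1]; ring
      have e2 : (c' + (s / Real.sqrt 2) • u) ⟨a+1, ha⟩ = c' ⟨a+1, ha⟩ + s / Real.sqrt 2 := by
        show c' ⟨a+1, ha⟩ + ((s / Real.sqrt 2) • u) ⟨a+1, ha⟩ = _
        rw [huapp2]
      rw [e1, e2] at hmono
      have h22 : Real.sqrt 2 * Real.sqrt 2 = 2 := Real.mul_self_sqrt (by norm_num)
      have h2s : 2 * (s / Real.sqrt 2) = Real.sqrt 2 * s := by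
        rw [mul_div_assoc']
        rw [div_eq_iff hs2.ne']
        nlinarith [h22]
      linarith [hmono, h2s]
    -- telescoping
    set C : ℕ → ℝ := fun j => if h : j < n then c' ⟨j, h⟩ else c' ⟨n-1, hlast⟩ with hC
    have htel : c' ⟨0, h0n⟩ - c' ⟨n-1, hlast⟩ = ∑ j ∈ Finset.range (n-1), (C j - C (j+1)) := by
      rw [Finset.sum_range_sub' C (n-1)]
      have e0 : C 0 = c' ⟨0, h0n⟩ := by simp [hC, dif_pos h0n]
      have e1 : C (n-1) = c' ⟨n-1, hlast⟩ := by simp [hC, dif_pos hlast]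
      rw [e0, e1]
    have hsumge : ((n:ℝ) - 1) * (Real.sqrt 2 * s) ≤ c' ⟨0, h0n⟩ - c' ⟨n-1, hlast⟩ := by
      rw [htel]
      have : ∀ j ∈ Finset.range (n-1), Real.sqrt 2 * s ≤ C j - C (j+1) := by
        intro j hj
        rw [Finset.mem_range] at hj
        have hj1 : j + 1 < n := by omega
        have hj0 : j < n := by omega
        have := step3 j hj1
        simp only [hC, dif_pos hj0, dif_pos hj1]
        exact this
      calc ((n:ℝ) - 1) * (Real.sqrt 2 * s) = (n - 1 : ℕ) * (Real.sqrt 2 * s) := by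
            rw [Nat.cast_sub hn]; norm_num
        _ = ∑ _j ∈ Finset.range (n-1), Real.sqrt 2 * s := by
            rw [Finset.sum_const, Finset.card_range, nsmul_eq_mul]
        _ ≤ _ := Finset.sum_le_sum this
    -- combine
    have hfinal : s * (2 + ((n:ℝ) - 1) * Real.sqrt 2) ≤ 1 := by nlinarith
    rw [hρ, le_div_iff₀ hden]
    linarith [hfinal]

/-- The shape regularity of the Kuhn simplex equals `γ(T̂) = √n (1 + (n−1)/√2)`. -/
theorem kuhn_shapeReg (n : ℕ) (hn : 1 ≤ n) :
    shapeReg (kuhnSimplex n) = Real.sqrt n * (1 + ((n : ℝ) - 1) / Real.sqrt 2) := by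
  have hs2 : (0:ℝ) < Real.sqrt 2 := by positivity
  have h22 : Real.sqrt 2 * Real.sqrt 2 = 2 := Real.mul_self_sqrt (by norm_num)
  have hn1 : (0:ℝ) ≤ (n:ℝ) - 1 := by
    have : (1:ℝ) ≤ (n:ℝ) := by exact_mod_cast hn
    linarith
  have hden : (0:ℝ) < 2 + ((n:ℝ) - 1) * Real.sqrt 2 := by positivity
  rw [shapeReg, circumDiam, inDiam, kuhn_circum n, kuhn_inradius n hn]
  rw [mul_div_cancel₀ _ (by norm_num : (2:ℝ) ≠ 0)]
  rw [div_eq_iff (by positivity : (2 * (1 / (2 + ((n:ℝ) - 1) * Real.sqrt 2))) ≠ 0)]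
  have h22' : Real.sqrt 2 ^ 2 = 2 := Real.sq_sqrt (by norm_num)
  field_simp
  ring_nf
  linear_combination ((n:ℝ) - 1) * h22'
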